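/- For the clique transmission transition probabilities: (a) if there exists a disjoint clique of size $j$ with $j>i$, then $p^{c}_{k,i,j}=0$ (the resulting maximal clique cannot be smaller than the existing disjoint clique); and (b) for $j\le i$, the conditional probability dominates the no-disjoint-clique case: $p^{c}_{k,i,0}\le p^{c}_{k,i,j}$. -/

import Mathlib

open Finset MeasureTheory

/-- The transition probability `p^c_{k,i,j}` for the clique action: a clique of
size `k` is transmitted, each receiver fails independently with probability
`p` (`ω l = true` means receiver `l` fails), and conditioned on the largest
disjoint clique having size `j`, the new maximal clique size is
`max(#failures, j)`; `j = 0` recovers the no-disjoint-clique binomial case. -/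
noncomputable def pcProb (k : ℕ) (p : ENNReal) (hp : p ≤ 1) (i j : ℕ) : ENNReal :=
  Measure.pi (fun _ : Fin k => (PMF.bernoulli p.toNNReal
    (ENNReal.coe_le_one_iff.1 (ENNReal.coe_toNNReal_le_self.trans hp))).toMeasure)
    {ω | max (univ.filter (fun l => ω l = true)).card j = i}

/-- (a) if the disjoint clique size `j` exceeds `i`, then
`p^c_{k,i,j} = 0` (the resulting maximal clique cannot be smaller than the
existing disjoint clique); (b) for `j ≤ i` the conditional probability
dominates the no-disjoint-clique case: `p^c_{k,i,0} ≤ p^c_{k,i,j}`. -/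
theorem pc_properties (k : ℕ) (p : ENNReal) (hp : p ≤ 1) :
    (∀ i j : ℕ, i < j → pcProb k p hp i j = 0) ∧
    (∀ i j : ℕ, j ≤ i → pcProb k p hp i 0 ≤ pcProb k p hp i j) := by
  constructor
  · intro i j hij
    unfold pcProb
    have hset : {ω : Fin k → Bool | max (univ.filter (fun l => ω l = true)).card j = i} = ∅ := by
      ext ω
      simp only [Set.mem_setOf_eq, Set.mem_empty_iff_false, iff_false]
      intro h
      have := le_max_right (univ.filter (fun l => ω l = true)).card j
      omega
    rw [hset, measure_empty]
  · intro i j hji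
    unfold pcProb
    apply measure_mono
    intro ω hω
    simp only [Set.mem_setOf_eq, Nat.max_zero] at hω ⊢
    omega
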